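/- Let k ≥ 0, N = 3k+2, and let λ_1,…,λ_{N+1}, a_1,…,a_{N+1}, b_1,…,b_{N+1} be real numbers. With Δ_N, Δ_{N+1}, A_N, B_N, A_{N−1}, B_{N−1} defined from this data as in the context, one has the identity A_{N−1} B_N − A_N B_{N−1} = Δ_N · Δ_{N+1}[N, N+1; 1, 2]. -/

import Mathlib

open Matrix

/-- Entry in column `c` (0-based) of the row built from `(λ_j, a_j, b_j)`:
the columns cycle through `λ_j^{2i}`, `λ_j^{2i} a_j`, `λ_j^{2i+1} b_j`. -/
noncomputable def colEntry (lam a b : ℕ → ℝ) (j c : ℕ) : ℝ :=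
  if c % 3 = 0 then lam j ^ (2 * (c / 3))
  else if c % 3 = 1 then lam j ^ (2 * (c / 3)) * a j
  else lam j ^ (2 * (c / 3) + 1) * b j

/-- The determinant `Δ_n` (rows indexed `1, …, n`, columns `0, …, n-1` 0-based). -/
noncomputable def Dlt (lam a b : ℕ → ℝ) (n : ℕ) : ℝ :=
  Matrix.det (Matrix.of fun i c : Fin n => colEntry lam a b (i.1 + 1) c.1)

/-- `A_n = Δ_{n+1}[n+1; 1]` : delete the last row and the first column of `Δ_{n+1}`. -/
noncomputable def Adet (lam a b : ℕ → ℝ) (n : ℕ) : ℝ :=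
  Matrix.det (Matrix.of fun i c : Fin n => colEntry lam a b (i.1 + 1) (c.1 + 1))

/-- `B_n = Δ_{n+1}[n+1; 2]` : delete the last row and the second column of `Δ_{n+1}`. -/
noncomputable def Bdet (lam a b : ℕ → ℝ) (n : ℕ) : ℝ :=
  Matrix.det (Matrix.of fun i c : Fin n =>
    colEntry lam a b (i.1 + 1) (if c.1 = 0 then 0 else c.1 + 1))

/-- `C_n = Δ_{n+1}[n; 1]` : delete the second-to-last row and the first column of `Δ_{n+1}`. -/
noncomputable def Cdet (lam a b : ℕ → ℝ) (n : ℕ) : ℝ :=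
  Matrix.det (Matrix.of fun i c : Fin n =>
    colEntry lam a b ((if i.1 + 1 < n then i.1 else i.1 + 1) + 1) (c.1 + 1))

/-- `D_n = Δ_{n+1}[n; 2]` : delete the second-to-last row and the second column of `Δ_{n+1}`. -/
noncomputable def Ddet (lam a b : ℕ → ℝ) (n : ℕ) : ℝ :=
  Matrix.det (Matrix.of fun i c : Fin n =>
    colEntry lam a b ((if i.1 + 1 < n then i.1 else i.1 + 1) + 1)
      (if c.1 = 0 then 0 else c.1 + 1))

section Aux

/-- Cramer-type linear dependence of the `m+2` columns of an `(m+1) × (m+2)` matrix. -/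
lemma rowdep (m : ℕ) (X : Matrix (Fin (m + 1)) (Fin (m + 2)) ℝ) (i : Fin (m + 1)) :
    ∑ j : Fin (m + 2),
      (-1 : ℝ) ^ (j : ℕ) * Matrix.det (X.submatrix id (Fin.succAbove j)) * X i j = 0 := by
  set Z : Matrix (Fin (m + 2)) (Fin (m + 2)) ℝ :=
    Matrix.of (Fin.snoc (fun r : Fin (m + 1) => X r) (X i)) with hZ
  have hZc : ∀ (r : Fin (m + 1)) (c : Fin (m + 2)), Z r.castSucc c = X r c := fun r c => by
    simp [hZ]
  have hZl : ∀ c : Fin (m + 2), Z (Fin.last (m + 1)) c = X i c := fun c => by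
    simp [hZ]
  have h0 : Matrix.det Z = 0 :=
    Matrix.det_zero_of_row_eq (Fin.ne_of_lt (Fin.castSucc_lt_last i))
      (funext fun c => (hZc i c).trans (hZl c).symm)
  have hsub : ∀ j : Fin (m + 2),
      Z.submatrix (Fin.last (m + 1)).succAbove (Fin.succAbove j)
        = X.submatrix id (Fin.succAbove j) := by
    intro j
    ext r c
    simp [Fin.succAbove_last, hZc]
  have hexp := Matrix.det_succ_row Z (Fin.last (m + 1))
  rw [h0] at hexp
  have h1 : (0 : ℝ) = (-1 : ℝ) ^ (m + 1) *
      ∑ j : Fin (m + 2),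
        (-1 : ℝ) ^ (j : ℕ) * Matrix.det (X.submatrix id (Fin.succAbove j)) * X i j := by
    rw [hexp, Finset.mul_sum]
    refine Finset.sum_congr rfl fun j _ => ?_
    rw [hsub j, hZl, Fin.val_last, pow_add]
    ring
  rcases mul_eq_zero.mp h1.symm with h | h
  · exact absurd h (pow_ne_zero _ (by norm_num))
  · exact h

/-- Multilinearity of the determinant in one column, for an arbitrary finite sum. -/
lemma det_updateColumn_sum'' {n : ℕ} {ι : Type*} (s : Finset ι)
    (A : Matrix (Fin n) (Fin n) ℝ) (p : Fin n) (v : ι → Fin n → ℝ) :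
    Matrix.det (A.updateCol p (fun r => ∑ t ∈ s, v t r))
      = ∑ t ∈ s, Matrix.det (A.updateCol p (v t)) := by
  classical
  induction s using Finset.cons_induction with
  | empty =>
      simp only [Finset.sum_empty]
      exact Matrix.det_eq_zero_of_column_eq_zero p fun r => by simp
  | cons t s ht ih =>
      simp only [Finset.sum_cons]
      rw [← ih]
      have h : (fun r => v t r + ∑ u ∈ s, v u r)
          = (v t + fun r => ∑ u ∈ s, v u r) := rfl
      rw [h, Matrix.det_updateCol_add]

end Aux

/-- The wide matrix: rows `0,…,m+1`, columns `0,…,m+2`. -/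
def pX (E : ℕ → ℕ → ℝ) (m : ℕ) : Matrix (Fin (m + 2)) (Fin (m + 3)) ℝ :=
  Matrix.of fun i c => E i.1 c.1

/-- Maximal minor of `pX` deleting column `j`. -/
noncomputable def pM (E : ℕ → ℕ → ℝ) (m : ℕ) (j : Fin (m + 3)) : ℝ :=
  Matrix.det ((pX E m).submatrix id (Fin.succAbove j))

/-- Small base matrix: rows `0,…,m`, columns `2,…,m+2`. -/
def pH (E : ℕ → ℕ → ℝ) (m : ℕ) : Matrix (Fin (m + 1)) (Fin (m + 1)) ℝ :=
  Matrix.of fun i c => E i.1 (c.1 + 2)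

/-- `pH` with its last column replaced by column `j` of the data. -/
def pF (E : ℕ → ℕ → ℝ) (m : ℕ) (j : ℕ) : Matrix (Fin (m + 1)) (Fin (m + 1)) ℝ :=
  (pH E m).updateCol (Fin.last m) (fun r => E r.1 j)

lemma pF_apply (E : ℕ → ℕ → ℝ) (m j : ℕ) (r c : Fin (m + 1)) :
    pF E m j r c = if c = Fin.last m then E r.1 j else E r.1 (c.1 + 2) := by
  simp [pF, pH, Matrix.updateCol_apply]

lemma plucker (m : ℕ) (E : ℕ → ℕ → ℝ) :
    Matrix.det (Matrix.of fun i c : Fin (m + 1) => E i.1 (c.1 + 1)) *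
        Matrix.det (Matrix.of fun i c : Fin (m + 2) =>
          E i.1 (if c.1 = 0 then 0 else c.1 + 1))
      - Matrix.det (Matrix.of fun i c : Fin (m + 2) => E i.1 (c.1 + 1)) *
        Matrix.det (Matrix.of fun i c : Fin (m + 1) =>
          E i.1 (if c.1 = 0 then 0 else c.1 + 1))
    = Matrix.det (Matrix.of fun i c : Fin (m + 2) => E i.1 c.1) *
        Matrix.det (Matrix.of fun i c : Fin (m + 1) => E i.1 (c.1 + 2)) := by
  classical
  -- identify the three big minors
  have hM0 : pM E m 0 = Matrix.det (Matrix.of fun i c : Fin (m + 2) => E i.1 (c.1 + 1)) :=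
    congrArg Matrix.det (Matrix.ext fun i c => by simp [pX, pM, Fin.succAbove_zero])
  have hv1 : ∀ c : Fin (m + 2),
      ((1 : Fin (m + 3)).succAbove c).1 = if c.1 = 0 then 0 else c.1 + 1 := by
    intro c
    have h1 : ((1 : Fin (m + 3)) : ℕ) = 1 := rfl
    rcases Nat.eq_zero_or_pos c.1 with h | h
    · rw [if_pos h, Fin.succAbove_of_castSucc_lt _ _ (by
        rw [Fin.lt_def, h1, Fin.coe_castSucc]; omega)]
      simpa using h
    · rw [if_neg (by omega), Fin.succAbove_of_le_castSucc _ _ (by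
        rw [Fin.le_def, h1, Fin.coe_castSucc]; omega)]
      simp [Fin.val_succ]
  have hM1 : pM E m 1 = Matrix.det (Matrix.of fun i c : Fin (m + 2) =>
      E i.1 (if c.1 = 0 then 0 else c.1 + 1)) := by
    exact congrArg Matrix.det (Matrix.ext fun i c => by simp [pX, pM, hv1 c])
  have hMl : pM E m (Fin.last (m + 2))
      = Matrix.det (Matrix.of fun i c : Fin (m + 2) => E i.1 c.1) := by
    exact congrArg Matrix.det (Matrix.ext fun i c => by simp [pX, pM, Fin.succAbove_last])
  -- row dependence
  have hrow : ∀ r : Fin (m + 1),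
      ∑ j : Fin (m + 3), (-1 : ℝ) ^ (j : ℕ) * pM E m j * E r.1 j.1 = 0 := by
    intro r
    have h := rowdep (m + 1) (pX E m) r.castSucc
    simpa [pX, pM] using h
  -- the key vanishing sum
  have hzero : ∑ j : Fin (m + 3),
      ((-1 : ℝ) ^ (j : ℕ) * pM E m j) * Matrix.det (pF E m j.1) = 0 := by
    have h1 : ∀ j : Fin (m + 3),
        ((-1 : ℝ) ^ (j : ℕ) * pM E m j) * Matrix.det (pF E m j.1)
          = Matrix.det ((pH E m).updateCol (Fin.last m)
              (fun r => ((-1 : ℝ) ^ (j : ℕ) * pM E m j) * E r.1 j.1)) := by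
      intro j
      rw [show (fun r : Fin (m + 1) => ((-1 : ℝ) ^ (j : ℕ) * pM E m j) * E r.1 j.1)
            = ((-1 : ℝ) ^ (j : ℕ) * pM E m j) • (fun r : Fin (m + 1) => E r.1 j.1)
          from rfl, Matrix.det_updateCol_smul]
      rfl
    rw [Finset.sum_congr rfl fun j _ => h1 j,
      ← det_updateColumn_sum'' (ι := Fin (m + 3)) Finset.univ (pH E m) (Fin.last m)
        (fun j r => ((-1 : ℝ) ^ (j : ℕ) * pM E m j) * E r.1 j.1)]
    have h2 : (fun r : Fin (m + 1) =>
        ∑ j : Fin (m + 3), ((-1 : ℝ) ^ (j : ℕ) * pM E m j) * E r.1 j.1)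
          = fun _ => (0 : ℝ) := by
      funext r
      rw [← hrow r]
    rw [h2]
    exact Matrix.det_eq_zero_of_column_eq_zero _ fun r => by
      rw [Matrix.updateCol_self]
  -- middle terms vanish
  have hmid : ∀ j : Fin (m + 3), j ≠ 0 → j ≠ 1 → j ≠ Fin.last (m + 2) →
      Matrix.det (pF E m j.1) = 0 := by
    intro j h0 h1 hl
    have hj0 : j.1 ≠ 0 := fun h => h0 (Fin.ext h)
    have hj1 : j.1 ≠ 1 := fun h => h1 (Fin.ext h)
    have hjl : j.1 ≠ m + 2 := fun h => hl (Fin.ext (by simp [h]))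
    have hjlt : j.1 < m + 3 := j.2
    have hne : (⟨j.1 - 2, by omega⟩ : Fin (m + 1)) ≠ Fin.last m := by
      intro hEq
      have := congrArg Fin.val hEq
      simp at this
      omega
    refine Matrix.det_zero_of_column_eq (i := (⟨j.1 - 2, by omega⟩ : Fin (m + 1)))
      (j := Fin.last m) hne ?_
    intro r
    rw [pF_apply, pF_apply, if_neg hne, if_pos rfl]
    show E r.1 ((j.1 - 2) + 2) = E r.1 j.1
    congr 1
    omega
  -- the three surviving terms
  have hB : Matrix.det (pF E m 0) = (-1 : ℝ) ^ m *
      Matrix.det (Matrix.of fun i c : Fin (m + 1) =>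
        E i.1 (if c.1 = 0 then 0 else c.1 + 1)) := by
    have h : pF E m 0 = (Matrix.of fun i c : Fin (m + 1) =>
        E i.1 (if c.1 = 0 then 0 else c.1 + 1)).submatrix id (finRotate (m + 1)) := by
      ext r c
      rw [pF_apply, Matrix.submatrix_apply]
      by_cases hc : c = Fin.last m
      · rw [if_pos hc, hc]
        simp [Fin.val_add_one]
      · rw [if_neg hc]
        have hc1 : ((c + 1 : Fin (m + 1)) : ℕ) = c.1 + 1 := by rw [Fin.val_add_one, if_neg hc]
        have hc2 : c + 1 ≠ 0 := fun h => by simp [h] at hc1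
        simp [hc1]
        rw [if_neg hc2]
    rw [h, Matrix.det_permute', sign_finRotate]
    push_cast
    ring
  have hA : Matrix.det (pF E m 1) = (-1 : ℝ) ^ m *
      Matrix.det (Matrix.of fun i c : Fin (m + 1) => E i.1 (c.1 + 1)) := by
    have h : pF E m 1 = (Matrix.of fun i c : Fin (m + 1) =>
        E i.1 (c.1 + 1)).submatrix id (finRotate (m + 1)) := by
      ext r c
      rw [pF_apply, Matrix.submatrix_apply]
      by_cases hc : c = Fin.last m
      · rw [if_pos hc, hc]
        simp [Fin.val_add_one]
      · rw [if_neg hc]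
        simp [Fin.val_add_one, hc]
    rw [h, Matrix.det_permute', sign_finRotate]
    push_cast
    ring
  have hD : Matrix.det (pF E m (m + 2))
      = Matrix.det (Matrix.of fun i c : Fin (m + 1) => E i.1 (c.1 + 2)) := by
    refine congrArg Matrix.det (Matrix.ext fun r c => ?_)
    rw [pF_apply]
    by_cases hc : c = Fin.last m
    · rw [if_pos hc, hc]
      simp
    · rw [if_neg hc]
      simp
  -- distinctness
  have h01 : (0 : Fin (m + 3)) ≠ 1 := by
    intro h; exact absurd (congrArg Fin.val h) (by simp)
  have h0l : (0 : Fin (m + 3)) ≠ Fin.last (m + 2) := by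
    intro h; have := congrArg Fin.val h; simp at this
  have h1l : (1 : Fin (m + 3)) ≠ Fin.last (m + 2) := by
    intro h; have := congrArg Fin.val h; simp at this
  -- split the sum
  have hval0 : ((0 : Fin (m + 3)) : ℕ) = 0 := rfl
  have hval1 : ((1 : Fin (m + 3)) : ℕ) = 1 := rfl
  have hsplit : ∑ j : Fin (m + 3),
      ((-1 : ℝ) ^ (j : ℕ) * pM E m j) * Matrix.det (pF E m j.1)
      = ((-1 : ℝ) ^ ((0 : Fin (m + 3)) : ℕ) * pM E m 0)
            * Matrix.det (pF E m ((0 : Fin (m + 3)) : ℕ))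
        + ((-1 : ℝ) ^ ((1 : Fin (m + 3)) : ℕ) * pM E m 1)
            * Matrix.det (pF E m ((1 : Fin (m + 3)) : ℕ))
        + ((-1 : ℝ) ^ ((Fin.last (m + 2)) : ℕ) * pM E m (Fin.last (m + 2)))
            * Matrix.det (pF E m ((Fin.last (m + 2)) : ℕ)) := by
    rw [← Finset.sum_subset (Finset.subset_univ
      ({0, 1, Fin.last (m + 2)} : Finset (Fin (m + 3))))
      (fun x _ hx => by
        simp only [Finset.mem_insert, Finset.mem_singleton, not_or] at hx
        simp [hmid x hx.1 hx.2.1 hx.2.2])]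
    rw [Finset.sum_insert (by simp [h01, h0l]), Finset.sum_insert (by simp [h1l]),
      Finset.sum_singleton]
    ring
  rw [hsplit] at hzero
  rw [hval0, hval1, Fin.val_last] at hzero
  rw [hB, hA, hD, hM0, hM1, hMl] at hzero
  rw [show m + 2 = m + 1 + 1 from rfl, pow_succ, pow_succ] at hzero
  have hq : (-1 : ℝ) ^ m *
      (Matrix.det (Matrix.of fun i c : Fin (m + 2) => E i.1 (c.1 + 1)) *
          Matrix.det (Matrix.of fun i c : Fin (m + 1) =>
            E i.1 (if c.1 = 0 then 0 else c.1 + 1))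
        - Matrix.det (Matrix.of fun i c : Fin (m + 1) => E i.1 (c.1 + 1)) *
          Matrix.det (Matrix.of fun i c : Fin (m + 2) =>
            E i.1 (if c.1 = 0 then 0 else c.1 + 1))
        + Matrix.det (Matrix.of fun i c : Fin (m + 2) => E i.1 c.1) *
          Matrix.det (Matrix.of fun i c : Fin (m + 1) => E i.1 (c.1 + 2))) = 0 := by
    rw [← hzero]
    ring
  rcases mul_eq_zero.mp hq with h | h
  · exact absurd h (pow_ne_zero _ (by norm_num))
  · linarith

/-- For `N = 3k+2`: `A_{N-1} B_N - A_N B_{N-1} = Δ_N · Δ_{N+1}[N, N+1; 1, 2]`. -/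
theorem stmt13 (k : ℕ) (lam a b : ℕ → ℝ) :
    Adet lam a b (3 * k + 1) * Bdet lam a b (3 * k + 2)
      - Adet lam a b (3 * k + 2) * Bdet lam a b (3 * k + 1)
    = Dlt lam a b (3 * k + 2) *
        Matrix.det (Matrix.of fun i c : Fin (3 * k + 1) =>
          colEntry lam a b (i.1 + 1) (c.1 + 2)) := by
  have h := plucker (3 * k) (fun i c => colEntry lam a b (i + 1) c)
  unfold Adet Bdet Dlt
  exact h
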